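/- Suppose A is approximately weakly amenable and A is a closed two-sided ideal in its second dual (A**, □) with the first Arens product. Then A is approximately (2n−1)-weakly amenable for every n ∈ ℕ. -/

import Mathlib

open ContinuousLinearMap Filter Topology

open ContinuousLinearMap Filter Topology

/-- A Banach `A`-bimodule: a complete normed `ℂ`-space with commuting continuous
left and right `A`-actions, jointly bounded and bilinear. -/
structure BBimod (A : Type) [NonUnitalNormedRing A] [NormedSpace ℂ A] where
  carrier : Type
  [grp : NormedAddCommGroup carrier]
  [mod : NormedSpace ℂ carrier]
  [complete : CompleteSpace carrier]
  lsmul : A → carrier →L[ℂ] carrier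
  rsmul : A → carrier →L[ℂ] carrier
  lsmul_add : ∀ a b, lsmul (a + b) = lsmul a + lsmul b
  rsmul_add : ∀ a b, rsmul (a + b) = rsmul a + rsmul b
  lsmul_smul : ∀ (c : ℂ) (a), lsmul (c • a) = c • lsmul a
  rsmul_smul : ∀ (c : ℂ) (a), rsmul (c • a) = c • rsmul a
  lsmul_mul : ∀ a b, lsmul (a * b) = (lsmul a).comp (lsmul b)
  rsmul_mul : ∀ a b, rsmul (a * b) = (rsmul b).comp (rsmul a)
  lsmul_rsmul : ∀ a b, (lsmul a).comp (rsmul b) = (rsmul b).comp (lsmul a)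
  bound : ∃ C : ℝ, ∀ a, ‖lsmul a‖ ≤ C * ‖a‖ ∧ ‖rsmul a‖ ≤ C * ‖a‖

attribute [instance] BBimod.grp BBimod.mod BBimod.complete

variable {A : Type} [NonUnitalNormedRing A] [NormedSpace ℂ A]

/-- The dual of a Banach bimodule, with the canonical dual actions
`⟨u, Λ·a⟩ = ⟨a·u, Λ⟩` and `⟨u, a·Λ⟩ = ⟨u·a, Λ⟩`. -/
noncomputable def BBimod.dual (M : BBimod A) : BBimod A where
  carrier := M.carrier →L[ℂ] ℂ
  lsmul a := (compL ℂ M.carrier M.carrier ℂ).flip (M.rsmul a)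
  rsmul a := (compL ℂ M.carrier M.carrier ℂ).flip (M.lsmul a)
  lsmul_add a b := by ext Λ x; simp [M.rsmul_add]
  rsmul_add a b := by ext Λ x; simp [M.lsmul_add]
  lsmul_smul c a := by ext Λ x; simp [M.rsmul_smul]
  rsmul_smul c a := by ext Λ x; simp [M.lsmul_smul]
  lsmul_mul a b := by ext Λ x; simp [M.rsmul_mul]
  rsmul_mul a b := by ext Λ x; simp [M.lsmul_mul]
  lsmul_rsmul a b := by
    ext Λ x
    have h : M.lsmul b (M.rsmul a x) = M.rsmul a (M.lsmul b x) := by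
      have := congrArg (fun T : M.carrier →L[ℂ] M.carrier => T x) (M.lsmul_rsmul b a)
      simpa using this
    simp [h]
  bound := by
    obtain ⟨C, hC⟩ := M.bound
    refine ⟨C, fun a => ⟨?_, ?_⟩⟩
    · refine opNorm_le_bound _ ?_ fun Λ => ?_
      · exact le_trans (norm_nonneg _) (hC a).2
      · calc ‖Λ.comp (M.rsmul a)‖ ≤ ‖Λ‖ * ‖M.rsmul a‖ := opNorm_comp_le _ _
          _ ≤ (C * ‖a‖) * ‖Λ‖ := by
              rw [mul_comm]
              exact mul_le_mul_of_nonneg_right (hC a).2 (norm_nonneg _)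
    · refine opNorm_le_bound _ ?_ fun Λ => ?_
      · exact le_trans (norm_nonneg _) (hC a).1
      · calc ‖Λ.comp (M.lsmul a)‖ ≤ ‖Λ‖ * ‖M.lsmul a‖ := opNorm_comp_le _ _
          _ ≤ (C * ‖a‖) * ‖Λ‖ := by
              rw [mul_comm]
              exact mul_le_mul_of_nonneg_right (hC a).1 (norm_nonneg _)

variable (A) [IsScalarTower ℂ A A] [SMulCommClass ℂ A A] [CompleteSpace A]

/-- `A` as a Banach bimodule over itself. -/
noncomputable def BBimod.base : BBimod A where
  carrier := A
  lsmul a := ContinuousLinearMap.mul ℂ A a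
  rsmul a := (ContinuousLinearMap.mul ℂ A).flip a
  lsmul_add a b := by ext x; simp [add_mul]
  rsmul_add a b := by ext x; simp [mul_add]
  lsmul_smul c a := by ext x; simp [smul_mul_assoc]
  rsmul_smul c a := by ext x; simp [mul_smul_comm]
  lsmul_mul a b := by ext x; simp [mul_assoc]
  rsmul_mul a b := by ext x; simp [mul_assoc]
  lsmul_rsmul a b := by ext x; simp [mul_assoc]
  bound := by
    refine ⟨1, fun a => ⟨?_, ?_⟩⟩
    · simpa using ContinuousLinearMap.opNorm_mul_apply_le ℂ A a
    · refine le_trans (opNorm_le_bound _ (norm_nonneg a) fun x => ?_) (by simp)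
      simpa [mul_comm] using norm_mul_le x a


/-- The `n`-th dual `A^(n)` of `A` as a Banach `A`-bimodule. -/
noncomputable def iterDual : ℕ → BBimod A
  | 0 => BBimod.base A
  | n + 1 => (iterDual n).dual

variable {A}

/-- `D` is a derivation from `A` into the Banach bimodule `M`. -/
def IsDerivation (M : BBimod A) (D : A →L[ℂ] M.carrier) : Prop :=
  ∀ a b : A, D (a * b) = M.lsmul a (D b) + M.rsmul b (D a)

/-- `D` is an inner derivation. -/
def IsInner (M : BBimod A) (D : A →L[ℂ] M.carrier) : Prop :=
  ∃ x : M.carrier, ∀ a : A, D a = M.lsmul a x - M.rsmul a x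

/-- `D` is approximately inner: there is a net `(x_i)` in `M` with
`D a = lim_i (a·x_i − x_i·a)` for every `a`. -/
def IsApproxInner (M : BBimod A) (D : A →L[ℂ] M.carrier) : Prop :=
  ∃ (ι : Type) (l : Filter ι) (x : ι → M.carrier), l.NeBot ∧
    ∀ a : A, Tendsto (fun i => M.lsmul a (x i) - M.rsmul a (x i)) l (𝓝 (D a))

variable (A)

/-- `A` is weakly amenable. -/
def WeaklyAmenable : Prop :=
  ∀ D : A →L[ℂ] (iterDual A 1).carrier, IsDerivation (iterDual A 1) D → IsInner (iterDual A 1) D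

/-- `A` is approximately `n`-weakly amenable. -/
def ApproxNWeaklyAmenable (n : ℕ) : Prop :=
  ∀ D : A →L[ℂ] (iterDual A n).carrier,
    IsDerivation (iterDual A n) D → IsApproxInner (iterDual A n) D

/-- `A` is `n`-weakly amenable. -/
def NWeaklyAmenable (n : ℕ) : Prop :=
  ∀ D : A →L[ℂ] (iterDual A n).carrier,
    IsDerivation (iterDual A n) D → IsInner (iterDual A n) D

/-- `A` is approximately weakly amenable. -/
def ApproxWeaklyAmenable : Prop := ApproxNWeaklyAmenable A 1

/-- `A` is approximately amenable: every continuous derivation into the dual of a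
Banach `A`-bimodule is approximately inner. -/
def ApproxAmenable : Prop :=
  ∀ (X : BBimod A) (D : A →L[ℂ] X.dual.carrier), IsDerivation X.dual D → IsApproxInner X.dual D

section SecondDual
variable (A : Type) [NonUnitalNormedRing A] [NormedSpace ℂ A]
  [IsScalarTower ℂ A A] [SMulCommClass ℂ A A]

/-- The map `f ↦ n □ f` entering the definition of the first Arens product. -/
noncomputable def arensAux (n : (A →L[ℂ] ℂ) →L[ℂ] ℂ) :
    (A →L[ℂ] ℂ) →L[ℂ] (A →L[ℂ] ℂ) :=
  (compL ℂ A (A →L[ℂ] ℂ) ℂ n).comp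
    (((compL ℂ A (A →L[ℂ] A) (A →L[ℂ] ℂ)).flip (ContinuousLinearMap.mul ℂ A)).comp
      (compL ℂ A A ℂ))

/-- The first Arens product `m □ n` on the second dual of `A`. -/
noncomputable def arens (m n : (A →L[ℂ] ℂ) →L[ℂ] ℂ) : (A →L[ℂ] ℂ) →L[ℂ] ℂ :=
  m.comp (arensAux A n)

variable {A}

lemma arens_add_left (m n p : (A →L[ℂ] ℂ) →L[ℂ] ℂ) :
    arens A (m + n) p = arens A m p + arens A n p := by
  ext f; simp [arens]

lemma arens_add_right (m n p : (A →L[ℂ] ℂ) →L[ℂ] ℂ) :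
    arens A m (n + p) = arens A m n + arens A m p := by
  ext f; simp [arens, arensAux, map_add]

lemma arens_zero_left (m : (A →L[ℂ] ℂ) →L[ℂ] ℂ) : arens A 0 m = 0 := by
  ext f; simp [arens]

lemma arens_zero_right (m : (A →L[ℂ] ℂ) →L[ℂ] ℂ) : arens A m 0 = 0 := by
  ext f
  have h0 : arensAux A (0 : (A →L[ℂ] ℂ) →L[ℂ] ℂ) f = 0 := by ext a; rfl
  show m (arensAux A 0 f) = 0
  rw [h0, map_zero]

lemma arens_smul_left (c : ℂ) (m n : (A →L[ℂ] ℂ) →L[ℂ] ℂ) :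
    arens A (c • m) n = c • arens A m n := by
  ext f; simp [arens]

lemma arens_smul_right (c : ℂ) (m n : (A →L[ℂ] ℂ) →L[ℂ] ℂ) :
    arens A m (c • n) = c • arens A m n := by
  ext f
  have hs : arensAux A (c • n) f = c • arensAux A n f := by ext a; rfl
  show m (arensAux A (c • n) f) = c • m (arensAux A n f)
  rw [hs, map_smul]

lemma arens_assoc (m n p : (A →L[ℂ] ℂ) →L[ℂ] ℂ) :
    arens A (arens A m n) p = arens A m (arens A n p) := by
  ext f
  show m (arensAux A n (arensAux A p f)) = m (arensAux A (arens A n p) f)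
  congr 1
  ext a
  show n ((arensAux A p f).comp (ContinuousLinearMap.mul ℂ A a)) =
    n (arensAux A p (f.comp (ContinuousLinearMap.mul ℂ A a)))
  congr 1
  ext b
  show p (f.comp (ContinuousLinearMap.mul ℂ A (a * b))) =
    p ((f.comp (ContinuousLinearMap.mul ℂ A a)).comp (ContinuousLinearMap.mul ℂ A b))
  congr 1
  ext c
  exact congrArg f (mul_assoc a b c)

lemma arens_norm (m n : (A →L[ℂ] ℂ) →L[ℂ] ℂ) : ‖arens A m n‖ ≤ ‖m‖ * ‖n‖ := by
  have hAux : ‖arensAux A n‖ ≤ ‖n‖ := by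
    refine opNorm_le_bound _ (norm_nonneg n) fun f => ?_
    have hHf : ‖(((compL ℂ A (A →L[ℂ] A) (A →L[ℂ] ℂ)).flip
        (ContinuousLinearMap.mul ℂ A)).comp (compL ℂ A A ℂ)) f‖ ≤ ‖f‖ := by
      refine opNorm_le_bound _ (norm_nonneg f) fun a => ?_
      show ‖f.comp (ContinuousLinearMap.mul ℂ A a)‖ ≤ ‖f‖ * ‖a‖
      calc ‖f.comp (ContinuousLinearMap.mul ℂ A a)‖
          ≤ ‖f‖ * ‖ContinuousLinearMap.mul ℂ A a‖ := opNorm_comp_le _ _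
        _ ≤ ‖f‖ * ‖a‖ :=
            mul_le_mul_of_nonneg_left (ContinuousLinearMap.opNorm_mul_apply_le ℂ A a)
              (norm_nonneg f)
    calc ‖arensAux A n f‖
        ≤ ‖n‖ * ‖(((compL ℂ A (A →L[ℂ] A) (A →L[ℂ] ℂ)).flip
            (ContinuousLinearMap.mul ℂ A)).comp (compL ℂ A A ℂ)) f‖ := opNorm_comp_le _ _
      _ ≤ ‖n‖ * ‖f‖ := mul_le_mul_of_nonneg_left hHf (norm_nonneg n)
  calc ‖arens A m n‖ ≤ ‖m‖ * ‖arensAux A n‖ := opNorm_comp_le _ _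
    _ ≤ ‖m‖ * ‖n‖ := mul_le_mul_of_nonneg_left hAux (norm_nonneg m)

variable (A)

/-- The second dual `A**` of `A`, as a type synonym, equipped with the
first Arens product. -/
def SecondDual : Type := (A →L[ℂ] ℂ) →L[ℂ] ℂ

noncomputable instance : NormedAddCommGroup (SecondDual A) :=
  inferInstanceAs (NormedAddCommGroup ((A →L[ℂ] ℂ) →L[ℂ] ℂ))

noncomputable instance : NonUnitalNormedRing (SecondDual A) :=
  { (inferInstance : NormedAddCommGroup (SecondDual A)) with
    mul := arens A
    left_distrib := fun m n p => arens_add_right m n p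
    right_distrib := fun m n p => arens_add_left m n p
    zero_mul := fun m => arens_zero_left m
    mul_zero := fun m => arens_zero_right m
    mul_assoc := fun m n p => arens_assoc m n p
    norm_mul_le := fun m n => arens_norm m n }

noncomputable instance : NormedSpace ℂ (SecondDual A) :=
  (inferInstance : NormedSpace ℂ ((A →L[ℂ] ℂ) →L[ℂ] ℂ))

instance : CompleteSpace (SecondDual A) :=
  (inferInstance : CompleteSpace ((A →L[ℂ] ℂ) →L[ℂ] ℂ))

instance : IsScalarTower ℂ (SecondDual A) (SecondDual A) :=
  ⟨fun c m n => arens_smul_left c m n⟩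

instance : SMulCommClass ℂ (SecondDual A) (SecondDual A) :=
  ⟨fun c m n => (arens_smul_right c m n).symm⟩

/-- The canonical embedding of `A` into its second dual. -/
noncomputable def canEmb : A →L[ℂ] SecondDual A := ContinuousLinearMap.apply ℂ ℂ

end SecondDual
variable (A : Type) [NonUnitalNormedRing A] [NormedSpace ℂ A]
  [IsScalarTower ℂ A A] [SMulCommClass ℂ A A] [CompleteSpace A]

/-! ### Auxiliary development for the main theorem -/

section Aux
variable {A : Type} [NonUnitalNormedRing A] [NormedSpace ℂ A]
  [IsScalarTower ℂ A A] [SMulCommClass ℂ A A] [CompleteSpace A]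

section Aux
variable {A : Type} [NonUnitalNormedRing A] [NormedSpace ℂ A]
  [IsScalarTower ℂ A A] [SMulCommClass ℂ A A] [CompleteSpace A]

noncomputable instance iterDualFunLike (k : ℕ) :
    FunLike ((iterDual A (k+1)).carrier) ((iterDual A k).carrier) ℂ :=
  inferInstanceAs (FunLike ((iterDual A k).carrier →L[ℂ] ℂ) ((iterDual A k).carrier) ℂ)

/-- evaluation embedding of the `k`-th dual into the `(k+2)`-th dual -/
noncomputable def kap (k : ℕ) :
    (iterDual A k).carrier →L[ℂ] (iterDual A (k + 2)).carrier :=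
  ContinuousLinearMap.apply ℂ ℂ

lemma kap_apply (k : ℕ) (x : (iterDual A k).carrier) (Λ : (iterDual A (k+1)).carrier) :
    kap k x Λ = Λ x := rfl

lemma ld_succ (k : ℕ) (a : A) (Λ : (iterDual A (k+1)).carrier) (x : (iterDual A k).carrier) :
    (iterDual A (k+1)).lsmul a Λ x = Λ ((iterDual A k).rsmul a x) := rfl

lemma rd_succ (k : ℕ) (a : A) (Λ : (iterDual A (k+1)).carrier) (x : (iterDual A k).carrier) :
    (iterDual A (k+1)).rsmul a Λ x = Λ ((iterDual A k).lsmul a x) := rfl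

lemma ld_zero (a x : A) : (iterDual A 0).lsmul a x = a * x := rfl
lemma rd_zero (a x : A) : (iterDual A 0).rsmul a x = x * a := rfl

-- ext lemma
lemma dual_ext {k : ℕ} {Λ Μ : (iterDual A (k+1)).carrier}
    (h : ∀ x : (iterDual A k).carrier, Λ x = Μ x) : Λ = Μ :=
  ContinuousLinearMap.ext (M₂ := ℂ) h

-- kap is a bimodule map
lemma kap_ld (k : ℕ) (a : A) (x : (iterDual A k).carrier) :
    kap k ((iterDual A k).lsmul a x) = (iterDual A (k+2)).lsmul a (kap k x) := rfl

lemma kap_rd (k : ℕ) (a : A) (x : (iterDual A k).carrier) :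
    kap k ((iterDual A k).rsmul a x) = (iterDual A (k+2)).rsmul a (kap k x) := rfl

-- identification of the module action on the second dual with the Arens product
lemma ls_two_arens (a : A) (ψ : (iterDual A 2).carrier) :
    (iterDual A 2).lsmul a ψ = arens A (canEmb A a) ψ := rfl

lemma rs_two_arens (a : A) (ψ : (iterDual A 2).carrier) :
    (iterDual A 2).rsmul a ψ = arens A ψ (canEmb A a) := rfl

lemma canEmb_eq_kap (b : A) : canEmb A b = kap 0 b := rfl

/-- The weak-compactness "drop" lemma: the action of `A` on the `(k+2)`-nd dual
lands in the canonical image of the `k`-th dual. -/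
lemma drop (hideal : ∀ (a : A) (m : SecondDual A),
      (∃ b : A, canEmb A b = canEmb A a * m) ∧ (∃ b : A, canEmb A b = m * canEmb A a)) :
    ∀ (k : ℕ) (a : A) (ψ : (iterDual A (k+2)).carrier),
      (∃ x : (iterDual A k).carrier, kap k x = (iterDual A (k+2)).lsmul a ψ) ∧
      (∃ x : (iterDual A k).carrier, kap k x = (iterDual A (k+2)).rsmul a ψ) := by
  intro k
  induction k with
  | zero =>
    intro a ψ
    obtain ⟨hl, hr⟩ := hideal a ψ
    exact ⟨hl, hr⟩
  | succ k ih =>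
    intro a Ξ
    constructor
    · -- left drop at k+1 from right drop at k
      refine ⟨(iterDual A (k+1)).lsmul a (Ξ.comp (kap k)), ?_⟩
      apply dual_ext (k := k+2); intro Φ
      obtain ⟨x, hx⟩ := (ih a Φ).2
      have hμ : ∀ μ : (iterDual A (k+1)).carrier,
          μ x = Φ ((iterDual A (k+1)).lsmul a μ) := by
        intro μ
        have := congrArg (fun T => T μ) hx
        simpa [kap_apply, rd_succ] using this
      calc kap (k+1) ((iterDual A (k+1)).lsmul a (Ξ.comp (kap k))) Φ
          = Φ ((iterDual A (k+1)).lsmul a (Ξ.comp (kap k))) := rfl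
        _ = (Ξ.comp (kap k)) x := (hμ _).symm
        _ = Ξ (kap k x) := rfl
        _ = Ξ ((iterDual A (k+2)).rsmul a Φ) := by rw [hx]
        _ = (iterDual A (k+3)).lsmul a Ξ Φ := rfl
    · -- right drop at k+1 from left drop at k
      refine ⟨(iterDual A (k+1)).rsmul a (Ξ.comp (kap k)), ?_⟩
      apply dual_ext (k := k+2); intro Φ
      obtain ⟨x, hx⟩ := (ih a Φ).1
      have hμ : ∀ μ : (iterDual A (k+1)).carrier,
          μ x = Φ ((iterDual A (k+1)).rsmul a μ) := by
        intro μ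
        have := congrArg (fun T => T μ) hx
        simpa [kap_apply, ld_succ] using this
      calc kap (k+1) ((iterDual A (k+1)).rsmul a (Ξ.comp (kap k))) Φ
          = Φ ((iterDual A (k+1)).rsmul a (Ξ.comp (kap k))) := rfl
        _ = (Ξ.comp (kap k)) x := (hμ _).symm
        _ = Ξ (kap k x) := rfl
        _ = Ξ ((iterDual A (k+2)).lsmul a Φ) := by rw [hx]
        _ = (iterDual A (k+3)).rsmul a Ξ Φ := rfl
/-- iterated canonical embedding `A → A^(2m)` -/
noncomputable def En : (m : ℕ) → (iterDual A 0).carrier →L[ℂ] (iterDual A (2*m)).carrier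
  | 0 => ContinuousLinearMap.id ℂ _
  | m+1 => (kap (2*m)).comp (En m)

/-- iterated canonical embedding `A* → A^(2m+1)` -/
noncomputable def Jm : (m : ℕ) → (iterDual A 1).carrier →L[ℂ] (iterDual A (2*m+1)).carrier
  | 0 => ContinuousLinearMap.id ℂ _
  | m+1 => (kap (2*m+1)).comp (Jm m)

/-- the projection `A^(2m+1) → A*` (restriction along `En`) -/
noncomputable def Pm (m : ℕ) :
    (iterDual A (2*m+1)).carrier →L[ℂ] (iterDual A 1).carrier :=
  (compL ℂ (iterDual A 0).carrier (iterDual A (2*m)).carrier ℂ).flip (En m)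

lemma Pm_apply (m : ℕ) (Λ : (iterDual A (2*m+1)).carrier) (x : (iterDual A 0).carrier) :
    Pm m Λ x = Λ (En m x) := rfl

lemma En_ld (m : ℕ) (a : A) (x : (iterDual A 0).carrier) :
    En m ((iterDual A 0).lsmul a x) = (iterDual A (2*m)).lsmul a (En m x) := by
  induction m with
  | zero => rfl
  | succ m ih =>
    show kap (2*m) (En m ((iterDual A 0).lsmul a x)) = _
    rw [ih, kap_ld]
    rfl

lemma En_rd (m : ℕ) (a : A) (x : (iterDual A 0).carrier) :
    En m ((iterDual A 0).rsmul a x) = (iterDual A (2*m)).rsmul a (En m x) := by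
  induction m with
  | zero => rfl
  | succ m ih =>
    show kap (2*m) (En m ((iterDual A 0).rsmul a x)) = _
    rw [ih, kap_rd]
    rfl

lemma Jm_ld (m : ℕ) (a : A) (f : (iterDual A 1).carrier) :
    Jm m ((iterDual A 1).lsmul a f) = (iterDual A (2*m+1)).lsmul a (Jm m f) := by
  induction m with
  | zero => rfl
  | succ m ih =>
    show kap (2*m+1) (Jm m ((iterDual A 1).lsmul a f)) = _
    rw [ih, kap_ld]
    rfl

lemma Jm_rd (m : ℕ) (a : A) (f : (iterDual A 1).carrier) :
    Jm m ((iterDual A 1).rsmul a f) = (iterDual A (2*m+1)).rsmul a (Jm m f) := by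
  induction m with
  | zero => rfl
  | succ m ih =>
    show kap (2*m+1) (Jm m ((iterDual A 1).rsmul a f)) = _
    rw [ih, kap_rd]
    rfl

lemma Pm_ld (m : ℕ) (a : A) (Λ : (iterDual A (2*m+1)).carrier) :
    Pm m ((iterDual A (2*m+1)).lsmul a Λ) = (iterDual A 1).lsmul a (Pm m Λ) := by
  apply dual_ext (k := 0); intro x
  calc Pm m ((iterDual A (2*m+1)).lsmul a Λ) x
      = Λ ((iterDual A (2*m)).rsmul a (En m x)) := rfl
    _ = Λ (En m ((iterDual A 0).rsmul a x)) := by rw [En_rd]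
    _ = (iterDual A 1).lsmul a (Pm m Λ) x := rfl

lemma Pm_rd (m : ℕ) (a : A) (Λ : (iterDual A (2*m+1)).carrier) :
    Pm m ((iterDual A (2*m+1)).rsmul a Λ) = (iterDual A 1).rsmul a (Pm m Λ) := by
  apply dual_ext (k := 0); intro x
  calc Pm m ((iterDual A (2*m+1)).rsmul a Λ) x
      = Λ ((iterDual A (2*m)).lsmul a (En m x)) := rfl
    _ = Λ (En m ((iterDual A 0).lsmul a x)) := by rw [En_ld]
    _ = (iterDual A 1).rsmul a (Pm m Λ) x := rfl

lemma Pm_Jm (m : ℕ) (f : (iterDual A 1).carrier) : Pm m (Jm m f) = f := by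
  induction m with
  | zero => rfl
  | succ m ih =>
    apply dual_ext (k := 0); intro x
    calc Pm (m+1) (Jm (m+1) f) x
        = kap (2*m+1) (Jm m f) (kap (2*m) (En m x)) := rfl
      _ = Jm m f (En m x) := rfl
      _ = Pm m (Jm m f) x := rfl
      _ = f x := by rw [ih]

/-- products of length `≥ n+1` -/
def Pk : ℕ → Set A
  | 0 => Set.univ
  | n+1 => {x | ∃ c q, q ∈ Pk n ∧ x = c * q}

lemma span_Pk_dense
    (h2 : (Submodule.span ℂ (Pk 1 : Set A)).topologicalClosure = ⊤) :
    ∀ n : ℕ, (Submodule.span ℂ (Pk n : Set A)).topologicalClosure = ⊤ := by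
  intro n
  induction n with
  | zero =>
    rw [show (Pk 0 : Set A) = Set.univ from rfl, Submodule.span_univ]
    exact IsClosed.submodule_topologicalClosure_eq (by simp [isClosed_univ])
  | succ n ih =>
    set T := (Submodule.span ℂ (Pk (n+1) : Set A)).topologicalClosure with hT
    have hTclosed : IsClosed (T : Set A) := Submodule.isClosed_topologicalClosure _
    have hP1 : (Pk 1 : Set A) ⊆ (T : Set A) := by
      rintro x ⟨c, q, -, rfl⟩
      have hq : q ∈ closure ((Submodule.span ℂ (Pk n : Set A)) : Set A) := by
        have : q ∈ ((Submodule.span ℂ (Pk n : Set A)).topologicalClosure : Set A) := by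
          rw [ih]; trivial
        simpa [Submodule.topologicalClosure_coe] using this
      have hmap : (ContinuousLinearMap.mul ℂ A c) '' (Submodule.span ℂ (Pk n : Set A)) ⊆
          (T : Set A) := by
        rintro y ⟨z, hz, rfl⟩
        have hmem : (ContinuousLinearMap.mul ℂ A c) z ∈
            (Submodule.span ℂ (Pk n : Set A)).map (ContinuousLinearMap.mul ℂ A c : A →ₗ[ℂ] A) :=
          Submodule.mem_map_of_mem hz
        rw [Submodule.map_span] at hmem
        refine Submodule.le_topologicalClosure _ (Submodule.span_mono ?_ hmem)
        rintro w ⟨p, hp, rfl⟩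
        exact ⟨c, p, hp, rfl⟩
      have hcq : c * q ∈ closure ((ContinuousLinearMap.mul ℂ A c) ''
          (Submodule.span ℂ (Pk n : Set A))) := by
        have hsub := image_closure_subset_closure_image
          (f := (ContinuousLinearMap.mul ℂ A c))
          (s := ((Submodule.span ℂ (Pk n : Set A)) : Set A))
          (ContinuousLinearMap.mul ℂ A c).continuous
        exact hsub (Set.mem_image_of_mem _ hq)
      have : c * q ∈ closure (T : Set A) := closure_mono hmap hcq
      rwa [hTclosed.closure_eq] at this
    have h1T : Submodule.span ℂ (Pk 1 : Set A) ≤ T := Submodule.span_le.mpr hP1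
    have hmono := Submodule.topologicalClosure_mono h1T
    rw [h2, hTclosed.submodule_topologicalClosure_eq] at hmono
    exact top_le_iff.mp hmono
lemma dual_ext0 {f g : (iterDual A 1).carrier} (h : ∀ x : A, f x = g x) : f = g :=
  dual_ext (k := 0) h

lemma ls_one_apply (a : A) (f : (iterDual A 1).carrier) (y : A) :
    (iterDual A 1).lsmul a f y = f (y * a) := rfl

lemma rs_one_apply (a : A) (f : (iterDual A 1).carrier) (y : A) :
    (iterDual A 1).rsmul a f y = f (a * y) := rfl

lemma span_sq_dense (h : ApproxWeaklyAmenable A) :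
    (Submodule.span ℂ (Pk 1 : Set A)).topologicalClosure = ⊤ := by
  by_contra hne
  set S := (Submodule.span ℂ (Pk 1 : Set A)).topologicalClosure with hS
  haveI hSclosed : IsClosed (S : Set A) := Submodule.isClosed_topologicalClosure _
  obtain ⟨x, hx⟩ : ∃ x : A, x ∉ S := by
    by_contra hall
    push_neg at hall
    exact hne (Submodule.eq_top_iff'.mpr hall)
  -- quotient map as a continuous linear map
  let mkC : A →L[ℂ] (A ⧸ S) :=
    LinearMap.mkContinuous S.mkQ 1 (fun y => by
      simpa using Submodule.Quotient.norm_mk_le S y)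
  have hmkx : (Submodule.Quotient.mk x : A ⧸ S) ≠ 0 := by
    simpa [Submodule.Quotient.mk_eq_zero] using hx
  obtain ⟨g, -, hgx⟩ := exists_dual_vector ℂ (Submodule.Quotient.mk x : A ⧸ S) (norm_ne_zero_iff.mpr hmkx)
  set f : A →L[ℂ] ℂ := g.comp mkC with hf
  have hfS : ∀ y ∈ (Pk 1 : Set A), f y = 0 := by
    intro y hy
    have hyS : y ∈ S := Submodule.le_topologicalClosure _ (Submodule.subset_span hy)
    have : mkC y = 0 := by
      show S.mkQ y = 0
      simpa [Submodule.Quotient.mk_eq_zero] using hyS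
    simp [hf, this]
  have hfmul : ∀ a b : A, f (a * b) = 0 := fun a b => hfS _ ⟨a, b, trivial, rfl⟩
  have hfx : f x ≠ 0 := by
    have : f x = ‖(Submodule.Quotient.mk x : A ⧸ S)‖ := hgx
    rw [this]
    exact_mod_cast fun hc => hmkx (norm_eq_zero.mp (by exact_mod_cast hc))
  -- the derivation a ↦ f a • f
  set D : A →L[ℂ] (iterDual A 1).carrier := f.smulRight f with hD
  have hDder : IsDerivation (iterDual A 1) D := by
    intro a b
    have h1 : (iterDual A 1).lsmul a f = 0 := by
      apply dual_ext0; intro y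
      rw [ls_one_apply (f := f)]
      show f (y * a) = (0 : (iterDual A 0).carrier →L[ℂ] ℂ) y
      simp [hfmul]
      rfl
    have h2 : (iterDual A 1).rsmul b f = 0 := by
      apply dual_ext0; intro y
      rw [rs_one_apply (f := f)]
      show f (b * y) = (0 : (iterDual A 0).carrier →L[ℂ] ℂ) y
      simp [hfmul]
      rfl
    have hl : D (a * b) = f (a * b) • f := rfl
    have hr1 : (iterDual A 1).lsmul a (D b) = f b • (iterDual A 1).lsmul a f := by
      show (iterDual A 1).lsmul a (f b • f) = _
      exact map_smul ((iterDual A 1).lsmul a) (f b) f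
    have hr2 : (iterDual A 1).rsmul b (D a) = f a • (iterDual A 1).rsmul b f := by
      show (iterDual A 1).rsmul b (f a • f) = _
      exact map_smul ((iterDual A 1).rsmul b) (f a) f
    rw [hl, hr1, hr2, h1, h2, hfmul a b]
    simp
    exact zero_smul ℂ _
  obtain ⟨ι, l, w, hlne, hconv⟩ := h D hDder
  have hzero : ∀ i : ι,
      ((iterDual A 1).lsmul x (w i) - (iterDual A 1).rsmul x (w i)) x = 0 := by
    intro i
    have : (iterDual A 1).lsmul x (w i) x = (iterDual A 1).rsmul x (w i) x := rfl
    show ((iterDual A 1).lsmul x (w i)) x - ((iterDual A 1).rsmul x (w i)) x = 0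
    rw [this]; ring
  have hevcont : Continuous fun Λ : (iterDual A 1).carrier => Λ x :=
    (canEmb A x).continuous
  have htend : Tendsto (fun _ : ι => (0 : ℂ)) l (𝓝 (D x x)) := by
    have h2 := (hevcont.tendsto (D x)).comp (hconv x)
    have heq : ((fun Λ : (iterDual A 1).carrier => Λ x) ∘
        (fun i => (iterDual A 1).lsmul x (w i) - (iterDual A 1).rsmul x (w i))) =
        fun _ : ι => (0 : ℂ) := funext fun i => hzero i
    rwa [heq] at h2
  have : D x x = 0 := (tendsto_nhds_unique tendsto_const_nhds htend).symm
  have : f x * f x = 0 := by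
    have hDxx : D x x = f x * f x := by
      show (f x • f) x = f x * f x
      simp [smul_eq_mul]
    rwa [hDxx] at this
  exact hfx (by
    rcases mul_eq_zero.mp this with h | h <;> exact h)
/-- a one-sided action -/
noncomputable def act (k : ℕ) (p : Bool × A) (x : (iterDual A k).carrier) :
    (iterDual A k).carrier :=
  if p.1 then (iterDual A k).lsmul p.2 x else (iterDual A k).rsmul p.2 x

/-- iterated one-sided actions (innermost action first) -/
noncomputable def acts (k : ℕ) (L : List (Bool × A)) (x : (iterDual A k).carrier) :
    (iterDual A k).carrier :=
  L.foldl (fun y p => act k p y) x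

lemma acts_nil (k : ℕ) (x : (iterDual A k).carrier) : acts k [] x = x := rfl

lemma acts_cons (k : ℕ) (p : Bool × A) (L : List (Bool × A)) (x : (iterDual A k).carrier) :
    acts k (p :: L) x = acts k L (act k p x) := rfl

lemma acts_append (k : ℕ) (L₁ L₂ : List (Bool × A)) (x : (iterDual A k).carrier) :
    acts k (L₁ ++ L₂) x = acts k L₂ (acts k L₁ x) :=
  List.foldl_append

lemma kap_act (k : ℕ) (p : Bool × A) (x : (iterDual A k).carrier) :
    kap k (act k p x) = act (k+2) p (kap k x) := by
  rcases p with ⟨b, a⟩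
  cases b
  · simp only [act, if_neg Bool.false_ne_true]
    exact kap_rd k a x
  · simp only [act, if_pos rfl]
    exact kap_ld k a x

lemma kap_acts (k : ℕ) (L : List (Bool × A)) (x : (iterDual A k).carrier) :
    kap k (acts k L x) = acts (k+2) L (kap k x) := by
  induction L generalizing x with
  | nil => rfl
  | cons p L ih => rw [acts_cons, acts_cons, ih, kap_act]

lemma actsDrop (hideal : ∀ (a : A) (m : SecondDual A),
      (∃ b : A, canEmb A b = canEmb A a * m) ∧ (∃ b : A, canEmb A b = m * canEmb A a)) :
    ∀ (m : ℕ) (L : List (Bool × A)) (ψ : (iterDual A (2*m)).carrier), m ≤ L.length →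
      ∃ x : (iterDual A 0).carrier, En m x = acts (2*m) L ψ := by
  intro m
  induction m with
  | zero => intro L ψ _; exact ⟨acts 0 L ψ, rfl⟩
  | succ m ih =>
    intro L ψ hL
    match L with
    | [] => simp at hL
    | p :: L' =>
      have hdrop : ∃ y : (iterDual A (2*m)).carrier,
          kap (2*m) y = act (2*m+2) p ψ := by
        rcases p with ⟨b, a⟩
        cases b
        · simpa only [act, if_neg Bool.false_ne_true] using (drop hideal (2*m) a ψ).2
        · simpa only [act, if_pos rfl, ite_true] using (drop hideal (2*m) a ψ).1
      obtain ⟨y, hy⟩ := hdrop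
      obtain ⟨x, hx⟩ := ih L' y (by simpa using Nat.le_of_succ_le_succ hL)
      refine ⟨x, ?_⟩
      show kap (2*m) (En m x) = acts (2*m+2) (p :: L') ψ
      rw [hx, kap_acts, hy, acts_cons]

lemma expand_ls : ∀ (n : ℕ) (q : A), q ∈ (Pk n : Set A) →
    ∃ l : List (Bool × A), l.length = n + 1 ∧
      ∀ (k : ℕ) (ψ : (iterDual A k).carrier), (iterDual A k).lsmul q ψ = acts k l ψ := by
  intro n
  induction n with
  | zero =>
    intro q _
    exact ⟨[(true, q)], rfl, fun k ψ => by simp [acts, List.foldl, act]⟩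
  | succ n ih =>
    rintro q ⟨c, q', hq', rfl⟩
    obtain ⟨l, hlen, hl⟩ := ih q' hq'
    refine ⟨l ++ [(true, c)], by simp [hlen], fun k ψ => ?_⟩
    have : (iterDual A k).lsmul (c * q') ψ = (iterDual A k).lsmul c ((iterDual A k).lsmul q' ψ) := by
      rw [(iterDual A k).lsmul_mul]; rfl
    rw [this, hl, acts_append]
    simp [acts, List.foldl, act]

lemma expand_rs : ∀ (n : ℕ) (q : A), q ∈ (Pk n : Set A) →
    ∃ l : List (Bool × A), l.length = n + 1 ∧
      ∀ (k : ℕ) (ψ : (iterDual A k).carrier), (iterDual A k).rsmul q ψ = acts k l ψ := by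
  intro n
  induction n with
  | zero =>
    intro q _
    exact ⟨[(false, q)], rfl, fun k ψ => by simp [acts, List.foldl, act]⟩
  | succ n ih =>
    rintro q ⟨c, q', hq', rfl⟩
    obtain ⟨l, hlen, hl⟩ := ih q' hq'
    refine ⟨(false, c) :: l, by simp [hlen], fun k ψ => ?_⟩
    have : (iterDual A k).rsmul (c * q') ψ
        = (iterDual A k).rsmul q' ((iterDual A k).rsmul c ψ) := by
      rw [(iterDual A k).rsmul_mul]; rfl
    rw [this, hl, acts_cons]
    rfl
section Vanishing

variable (hideal : ∀ (a : A) (m : SecondDual A),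
      (∃ b : A, canEmb A b = canEmb A a * m) ∧ (∃ b : A, canEmb A b = m * canEmb A a))
variable (m : ℕ) (Q : A →L[ℂ] (iterDual A (2*m+1)).carrier)
variable (hQ0 : ∀ (a : A) (x : (iterDual A 0).carrier), Q a (En m x) = 0)

include hideal hQ0 in
lemma CL0 (p : A) (L : List (Bool × A)) (hL : 2*m ≤ L.length)
    (ψ : (iterDual A (2*m)).carrier) :
    Q p (acts (2*m) L ψ) = 0 := by
  obtain ⟨x, hx⟩ := actsDrop hideal m L ψ (le_trans (by omega) hL)
  rw [← hx]
  exact hQ0 p x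

include hideal hQ0 in
lemma CL (hQder : IsDerivation (iterDual A (2*m+1)) Q) :
    ∀ (n : ℕ) (p : A), p ∈ (Pk n : Set A) → ∀ (L : List (Bool × A)),
      2*m ≤ n + L.length → ∀ ψ : (iterDual A (2*m)).carrier,
        Q p (acts (2*m) L ψ) = 0 := by
  intro n
  induction n with
  | zero =>
    intro p _ L hL ψ
    exact CL0 hideal m Q hQ0 p L (by simpa using hL) ψ
  | succ n ih =>
    rintro p ⟨c, q, hq, rfl⟩ L hL ψ
    have hval : Q (c * q) (acts (2*m) L ψ)
        = Q q ((iterDual A (2*m)).rsmul c (acts (2*m) L ψ))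
          + Q c ((iterDual A (2*m)).lsmul q (acts (2*m) L ψ)) := by
      have := congrArg (fun Λ : (iterDual A (2*m+1)).carrier => Λ (acts (2*m) L ψ))
        (hQder c q)
      exact this
    have hterm1 : Q q ((iterDual A (2*m)).rsmul c (acts (2*m) L ψ)) = 0 := by
      have he : (iterDual A (2*m)).rsmul c (acts (2*m) L ψ)
          = acts (2*m) (L ++ [(false, c)]) ψ := by
        rw [acts_append]
        simp [acts, List.foldl, act]
      rw [he]
      exact ih q hq (L ++ [(false, c)]) (by simp; omega) ψ
    have hterm2 : Q c ((iterDual A (2*m)).lsmul q (acts (2*m) L ψ)) = 0 := by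
      obtain ⟨l, hlen, hl⟩ := expand_ls n q hq
      rw [hl, ← acts_append]
      exact CL0 hideal m Q hQ0 c (L ++ l) (by simp [hlen]; omega) ψ
    rw [hval, hterm1, hterm2, add_zero]

include hideal hQ0 in
set_option synthInstance.maxHeartbeats 1000000 in
lemma Qzero (hQder : IsDerivation (iterDual A (2*m+1)) Q)
    (hdense : (Submodule.span ℂ (Pk (2*m) : Set A)).topologicalClosure = ⊤) :
    ∀ a : A, Q a = 0 := by
  have hker : ∀ p ∈ (Pk (2*m) : Set A), Q p = 0 := by
    intro p hp
    apply dual_ext (k := 2*m)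
    intro ψ
    have := CL hideal m Q hQ0 hQder (2*m) p hp [] (by simp) ψ
    exact this
  have hsub : (Pk (2*m) : Set A) ⊆ (LinearMap.ker (Q : A →ₗ[ℂ] (iterDual A (2*m+1)).carrier) : Set A) := by
    intro p hp
    simpa [LinearMap.mem_ker] using hker p hp
  have hle : (Submodule.span ℂ (Pk (2*m) : Set A)).topologicalClosure ≤ LinearMap.ker (Q : A →ₗ[ℂ] (iterDual A (2*m+1)).carrier) := by
    apply Submodule.topologicalClosure_minimal
    · exact Submodule.span_le.mpr hsub
    · exact ContinuousLinearMap.isClosed_ker Q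
  rw [hdense] at hle
  intro a
  have : a ∈ LinearMap.ker (Q : A →ₗ[ℂ] (iterDual A (2*m+1)).carrier) := hle trivial
  simpa [LinearMap.mem_ker] using this

end Vanishing
variable (h : ApproxWeaklyAmenable A)
variable (hideal : ∀ (a : A) (m : SecondDual A),
      (∃ b : A, canEmb A b = canEmb A a * m) ∧ (∃ b : A, canEmb A b = m * canEmb A a))
include h hideal in
lemma main_step (m : ℕ) : ApproxNWeaklyAmenable A (2*m+1) := by
  intro D hDder
  -- the projected derivation into A*
  set D1 : A →L[ℂ] (iterDual A 1).carrier := (Pm m).comp D with hD1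
  have hD1a : ∀ a : A, D1 a = Pm m (D a) := fun _ => rfl
  have hD1der : IsDerivation (iterDual A 1) D1 := by
    intro a b
    show Pm m (D (a * b)) = _
    rw [hDder a b, map_add, Pm_ld, Pm_rd]
    rfl
  -- the complementary derivation vanishes
  set Q : A →L[ℂ] (iterDual A (2*m+1)).carrier := D - (Jm m).comp D1 with hQ
  have hQa : ∀ a : A, Q a = D a - Jm m (D1 a) := fun _ => rfl
  have hQder : IsDerivation (iterDual A (2*m+1)) Q := by
    intro a b
    rw [hQa, hDder a b, hD1der a b, map_add, Jm_ld, Jm_rd]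
    have : (iterDual A (2*m+1)).lsmul a (Q b) + (iterDual A (2*m+1)).rsmul b (Q a)
        = (iterDual A (2*m+1)).lsmul a (D b - Jm m (D1 b))
          + (iterDual A (2*m+1)).rsmul b (D a - Jm m (D1 a)) := by
      rw [hQa, hQa]
    rw [this, map_sub, map_sub]
    abel
  have hQ0 : ∀ (a : A) (x : (iterDual A 0).carrier), Q a (En m x) = 0 := by
    intro a x
    have hPQ : Pm m (Q a) = 0 := by
      rw [hQa, map_sub, hD1a, Pm_Jm, sub_self]
    have : Q a (En m x) = Pm m (Q a) x := rfl
    rw [this, hPQ]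
    rfl
  have hdense : (Submodule.span ℂ (Pk (2*m) : Set A)).topologicalClosure = ⊤ :=
    span_Pk_dense (span_sq_dense h) (2*m)
  have hQzero : ∀ a : A, Q a = 0 := Qzero hideal m Q hQ0 hQder hdense
  have hDJ : ∀ a : A, D a = Jm m (D1 a) := by
    intro a
    have := hQzero a
    rw [hQa] at this
    exact sub_eq_zero.mp this
  obtain ⟨ι, l, w, hlne, hconv⟩ := h D1 hD1der
  refine ⟨ι, l, fun i => Jm m (w i), hlne, ?_⟩
  intro a
  have hnet : (fun i => (iterDual A (2*m+1)).lsmul a (Jm m (w i))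
        - (iterDual A (2*m+1)).rsmul a (Jm m (w i)))
      = (Jm m) ∘ (fun i => (iterDual A 1).lsmul a (w i) - (iterDual A 1).rsmul a (w i)) := by
    funext i
    show _ = Jm m ((iterDual A 1).lsmul a (w i) - (iterDual A 1).rsmul a (w i))
    rw [map_sub, Jm_ld, Jm_rd]
  rw [hnet, hDJ a]
  exact ((Jm m).continuous.tendsto (D1 a)).comp (hconv a)

end Aux

/-- If `A` is approximately weakly amenable and `A` is a closed two-sided ideal in
its second dual `(A**, □)`, then `A` is approximately `(2n−1)`-weakly amenable for
every `n ≥ 1`. -/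
theorem approxOddWeaklyAmenable_of_ideal_in_secondDual
    (h : ApproxWeaklyAmenable A)
    (hclosed : IsClosed (Set.range (canEmb A)))
    (hideal : ∀ (a : A) (m : SecondDual A),
      (∃ b : A, canEmb A b = canEmb A a * m) ∧ (∃ b : A, canEmb A b = m * canEmb A a)) :
    ∀ n : ℕ, 1 ≤ n → ApproxNWeaklyAmenable A (2 * n - 1) := by
  intro n hn
  obtain ⟨m, rfl⟩ : ∃ m, n = m + 1 := ⟨n - 1, by omega⟩
  have hidx : 2 * (m + 1) - 1 = 2 * m + 1 := by omega
  rw [hidx]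
  exact main_step h hideal m
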